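/- There exist constants c₁, c₂ > 0 such that for all n ≥ 2, the diameter δ(Cay(G_n, S)) of the Cayley graph of the lamplighter group G_n = ℤ₂ ≀ ℤ_n with generating set S satisfies c₁·n ≤ δ(Cay(G_n, S)) ≤ c₂·n. -/

import Mathlib

noncomputable section

/-- The underlying set of the lamplighter group `ℤ₂ ≀ ℤ_n`. -/
abbrev Lamplighter (n : ℕ) := (ZMod n → ZMod 2) × ZMod n

/-- Multiplication in the lamplighter group `ℤ₂ ≀ ℤ_n = (⊕ ℤ₂) ⋊ ℤ_n`, where `k ∈ ℤ_n`
acts on configurations by `(k·f)(i) = f(i − k)`. -/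
def llMul (n : ℕ) (x y : Lamplighter n) : Lamplighter n :=
  (fun i => x.1 i + y.1 (i - x.2), x.2 + y.2)

/-- Inversion in the lamplighter group `ℤ₂ ≀ ℤ_n`. -/
def llInv (n : ℕ) (x : Lamplighter n) : Lamplighter n :=
  (fun i => -x.1 (i + x.2), -x.2)

/-- The generator `(δ₀, 0)`: the lamp at position `0` is lit, no shift. -/
def llGenA (n : ℕ) : Lamplighter n :=
  (fun i => if i = 0 then 1 else 0, 0)

/-- The generator `(0, 1)`: no lamps lit, shift by `1`. -/
def llGenB (n : ℕ) : Lamplighter n := (fun _ => 0, 1)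

/-- The symmetrized generating set `S ∪ S⁻¹` of the lamplighter group. -/
def llGens (n : ℕ) : List (Lamplighter n) :=
  [llGenA n, llGenB n, llInv n (llGenA n), llInv n (llGenB n)]

/-- The Cayley graph of the lamplighter group `ℤ₂ ≀ ℤ_n` with respect to
`S = {(δ₀,0), (0,1)}`: distinct `x, y` are adjacent iff `y = s·x` for some `s ∈ S ∪ S⁻¹`
(the relation is symmetrized, which changes nothing as `S ∪ S⁻¹` is closed under inverses). -/
def llGraph (n : ℕ) : SimpleGraph (Lamplighter n) where
  Adj x y := x ≠ y ∧ ∃ s ∈ llGens n, y = llMul n s x ∨ x = llMul n s y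
  symm := by
    constructor
    rintro x y ⟨h1, s, hs, h2⟩
    exact ⟨h1.symm, s, hs, h2.symm⟩
  loopless := ⟨fun x h => h.1 rfl⟩

/-- The diameter of the Cayley graph of the lamplighter group `ℤ₂ ≀ ℤ_n`. -/
def llDiam (n : ℕ) : ℕ :=
  sSup {d : ℕ | ∃ x y : Lamplighter n, d = (llGraph n).dist x y}

/-- the diameters of the Cayley graphs of the lamplighter groups `ℤ₂ ≀ ℤ_n`
grow linearly: `c₁·n ≤ δ(Cay(G_n,S)) ≤ c₂·n` for some constants `c₁, c₂ > 0`. -/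
-- auxiliary
def llOne (n : ℕ) : Lamplighter n := (fun _ => 0, 0)

lemma llMul_assoc (n : ℕ) (x y z : Lamplighter n) :
    llMul n (llMul n x y) z = llMul n x (llMul n y z) := by
  simp only [llMul, Prod.mk.injEq]
  constructor
  · funext i; ring_nf
  · ring

lemma llMul_one (n : ℕ) (x : Lamplighter n) : llMul n x (llOne n) = x := by
  simp [llMul, llOne]

lemma llOne_mul (n : ℕ) (x : Lamplighter n) : llMul n (llOne n) x = x := by
  simp [llMul, llOne]

lemma llInv_mul (n : ℕ) (x : Lamplighter n) : llMul n (llInv n x) x = llOne n := by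
  simp only [llMul, llInv, llOne, Prod.mk.injEq]
  constructor
  · funext i; simp [sub_neg_eq_add]; generalize x.1 (i + x.2) = a; revert a; decide
  · ring

lemma adj_gen (n : ℕ) (hn : 2 ≤ n) (s : Lamplighter n) (hs : s ∈ llGens n)
    (x : Lamplighter n) : (llGraph n).Adj x (llMul n s x) := by
  haveI : NeZero n := ⟨by omega⟩
  refine (⟨?_, s, hs, Or.inl rfl⟩ : x ≠ llMul n s x ∧ ∃ t ∈ llGens n, llMul n s x = llMul n t x ∨ x = llMul n t (llMul n s x))
  have hone : (1 : ZMod n) ≠ 0 := by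
    intro h
    have := congrArg ZMod.val h
    rw [ZMod.val_one'' (by omega), ZMod.val_zero] at this
    exact one_ne_zero this
  fin_cases hs
  · intro h
    have := congrFun (congrArg Prod.fst h.symm) 0
    simp [llMul, llGenA] at this
  · intro h
    have := congrArg Prod.snd h.symm
    simp [llMul, llGenB] at this
    exact hone (by linear_combination this)
  · intro h
    have := congrFun (congrArg Prod.fst h.symm) 0
    simp [llMul, llGenA, llInv] at this
  · intro h
    have := congrArg Prod.snd h.symm
    simp [llMul, llGenB, llInv] at this
    exact hone (by linear_combination this)

lemma exists_walk_foldr (n : ℕ) (hn : 2 ≤ n) (L : List (Lamplighter n))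
    (hL : ∀ s ∈ L, s ∈ llGens n) (x : Lamplighter n) :
    ∃ w : (llGraph n).Walk x (L.foldr (llMul n) x), w.length = L.length := by
  induction L with
  | nil => exact ⟨SimpleGraph.Walk.nil, rfl⟩
  | cons s L ih =>
    obtain ⟨w, hw⟩ := ih (fun t ht => hL t (List.mem_cons_of_mem s ht))
    refine ⟨w.concat (adj_gen n hn s (hL s List.mem_cons_self) _), ?_⟩
    simp [SimpleGraph.Walk.length_concat, hw]

lemma foldr_eq_mul (n : ℕ) (L : List (Lamplighter n)) (x : Lamplighter n) :
    L.foldr (llMul n) x = llMul n (L.foldr (llMul n) (llOne n)) x := by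
  induction L with
  | nil => simp [llOne_mul]
  | cons s L ih => simp [List.foldr_cons, ih, llMul_assoc]

lemma natCast_val' (n : ℕ) [NeZero n] (a : ZMod n) : ((a.val : ℕ) : ZMod n) = a := by
  simp [ZMod.natCast_val, ZMod.cast_id]

lemma val_neg_one' (n : ℕ) (h : 2 ≤ n) : (-1 : ZMod n).val = n - 1 := by
  haveI : NeZero n := ⟨by omega⟩
  have h1 : (-1 : ZMod n) = ((n-1 : ℕ) : ZMod n) := by
    have h2 : ((n : ℕ) : ZMod n) = 0 := ZMod.natCast_self n
    push_cast [Nat.cast_sub (by omega : 1 ≤ n)]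
    rw [h2]; ring
  rw [h1, ZMod.val_cast_of_lt (by omega)]

lemma val_sub_one (n : ℕ) [NeZero n] (i : ZMod n) (hi : i ≠ 0) :
    (i - 1).val = i.val - 1 ∧ 1 ≤ i.val := by
  have h1 : 1 ≤ i.val := by
    rcases Nat.eq_zero_or_pos i.val with h | h
    · exact absurd ((ZMod.val_eq_zero i).mp h) hi
    · exact h
  have h2 : ((i.val - 1 : ℕ) : ZMod n) = i - 1 := by
    rw [Nat.cast_sub h1, natCast_val', Nat.cast_one]
  exact ⟨by rw [← h2, ZMod.val_cast_of_lt (by have := ZMod.val_lt i; omega)], h1⟩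

def llWord (n : ℕ) (f : ZMod n → ZMod 2) : ℕ → List (Lamplighter n)
  | 0 => []
  | m+1 => (if f (-((m+1 : ℕ) : ZMod n)) = 1 then [llGenA n] else []) ++
      (llGenB n :: llWord n f m)

lemma llWord_length (n : ℕ) (f : ZMod n → ZMod 2) (m : ℕ) :
    (llWord n f m).length ≤ 2 * m := by
  induction m with
  | zero => simp [llWord]
  | succ m ih =>
    rw [llWord]
    by_cases h : f (-((m+1 : ℕ) : ZMod n)) = 1
    · rw [if_pos h]
      simp only [List.length_append, List.length_cons, List.length_nil]
      omega
    · rw [if_neg h]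
      simp only [List.length_append, List.length_cons, List.length_nil]
      omega

lemma llWord_mem (n : ℕ) (f : ZMod n → ZMod 2) (m : ℕ) :
    ∀ s ∈ llWord n f m, s ∈ llGens n := by
  induction m with
  | zero => simp [llWord]
  | succ m ih =>
    intro s hs
    rw [llWord] at hs
    rcases List.mem_append.mp hs with h | h
    · split at h <;> simp_all [llGens]
    · rcases List.mem_cons.mp h with h | h
      · simp [h, llGens]
      · exact ih s h

lemma llWord_foldr (n : ℕ) (hn : 2 ≤ n) (f : ZMod n → ZMod 2) :
    ∀ m, m ≤ n →
      (llWord n f m).foldr (llMul n) (llOne n) =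
        (fun i => if i.val < m then f (i - (m : ℕ)) else 0, ((m : ℕ) : ZMod n)) := by
  haveI : NeZero n := ⟨by omega⟩
  intro m
  induction m with
  | zero =>
    intro _
    simp only [llWord, List.foldr_nil, llOne]
    refine Prod.ext ?_ (by simp)
    funext i
    simp
  | succ m ih =>
    intro hm
    have hrec := ih (by omega)
    rw [llWord, List.foldr_append, List.foldr_cons, hrec]
    have hzval : ((0:ZMod n) - 1).val = n - 1 := by
      rw [zero_sub]; exact val_neg_one' n hn
    have hB : llMul n (llGenB n)
        (fun i => if i.val < m then f (i - (m : ℕ)) else 0, ((m : ℕ) : ZMod n)) =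
        (fun i => if i.val < m + 1 ∧ i ≠ 0 then f (i - ((m+1 : ℕ) : ZMod n)) else 0,
          ((m+1 : ℕ) : ZMod n)) := by
      simp only [llMul, llGenB, Prod.mk.injEq]
      constructor
      · funext i
        simp only [zero_add]
        by_cases hi : i = 0
        · subst hi
          simp only [hzval, if_neg (by omega : ¬ n - 1 < m),
            if_neg (by simp : ¬((0:ZMod n).val < m + 1 ∧ (0:ZMod n) ≠ 0))]
        · obtain ⟨hv, h1⟩ := val_sub_one n i hi
          have harg : i - 1 - ((m:ℕ) : ZMod n) = i - ((m+1 : ℕ) : ZMod n) := by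
            push_cast; ring
          by_cases hlt : i.val < m + 1
          · simp only [if_pos (by omega : (i - 1).val < m), if_pos (show i.val < m + 1 ∧ i ≠ 0 from ⟨hlt, hi⟩), harg]
          · simp only [if_neg (show ¬(i.val < m + 1 ∧ i ≠ 0) from fun h => hlt h.1)]
            exact if_neg (by omega : ¬(i - 1).val < m)
      · push_cast; ring
    rw [hB]
    have hzlt : ((0:ZMod n)).val < m + 1 := by simp
    have hneg : (0:ZMod n) - ((m+1:ℕ) : ZMod n) = -((m+1:ℕ) : ZMod n) := by ring
    split
    case isTrue hA =>
      simp only [List.foldr_cons, List.foldr_nil, llMul, llGenA, Prod.mk.injEq, sub_zero,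
        zero_add]
      constructor
      · funext i
        by_cases hi : i = 0
        · subst hi
          rw [if_pos rfl, if_neg (by simp : ¬((0:ZMod n).val < m + 1 ∧ (0:ZMod n) ≠ 0)),
            if_pos hzlt, hneg, hA]
          simp
        · by_cases hlt : i.val < m + 1
          · rw [if_neg hi, if_pos ⟨hlt, hi⟩, if_pos hlt]; simp
          · rw [if_neg hi, if_neg (fun h => hlt h.1), if_neg hlt]; simp
      · trivial
    case isFalse hA =>
      simp only [List.foldr_nil, Prod.mk.injEq]
      constructor
      · funext i
        by_cases hi : i = 0
        · subst hi
          rw [if_neg (by simp : ¬((0:ZMod n).val < m + 1 ∧ (0:ZMod n) ≠ 0)),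
            if_pos hzlt, hneg]
          rcases (by decide : ∀ a : ZMod 2, a = 0 ∨ a = 1) (f (-((m+1:ℕ) : ZMod n)))
            with h | h
          · exact h.symm
          · exact absurd h hA
        · by_cases hlt : i.val < m + 1
          · rw [if_pos ⟨hlt, hi⟩, if_pos hlt]
          · rw [if_neg (fun h => hlt h.1), if_neg hlt]
      · trivial

lemma replicate_foldr (n : ℕ) (m : ℕ) :
    (List.replicate m (llGenB n)).foldr (llMul n) (llOne n) =
      (fun _ => 0, ((m : ℕ) : ZMod n)) := by
  induction m with
  | zero => simp [llOne]
  | succ m ih =>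
    rw [List.replicate_succ, List.foldr_cons, ih]
    simp only [llMul, llGenB, Prod.mk.injEq]
    exact ⟨by funext i; simp, by push_cast; ring⟩

lemma exists_word (n : ℕ) (hn : 2 ≤ n) (z : Lamplighter n) :
    ∃ L : List (Lamplighter n), (∀ s ∈ L, s ∈ llGens n) ∧ L.length ≤ 3 * n ∧
      L.foldr (llMul n) (llOne n) = z := by
  haveI : NeZero n := ⟨by omega⟩
  refine ⟨llWord n z.1 n ++ List.replicate z.2.val (llGenB n), ?_, ?_, ?_⟩
  · intro s hs
    rcases List.mem_append.mp hs with h | h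
    · exact llWord_mem n z.1 n s h
    · rw [List.eq_of_mem_replicate h]
      simp [llGens]
  · rw [List.length_append, List.length_replicate]
    have h1 := llWord_length n z.1 n
    have h2 := ZMod.val_lt z.2
    omega
  · rw [List.foldr_append, replicate_foldr, foldr_eq_mul, llWord_foldr n hn z.1 n le_rfl]
    have hcast : ((n : ℕ) : ZMod n) = 0 := ZMod.natCast_self n
    simp only [llMul, hcast]
    apply Prod.ext
    · funext i
      simp only [sub_zero, add_zero]
      rw [if_pos (ZMod.val_lt i)]
    · simp [natCast_val']

lemma dist_le_3n (n : ℕ) (hn : 2 ≤ n) (x y : Lamplighter n) :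
    (llGraph n).dist x y ≤ 3 * n ∧ (llGraph n).Reachable x y := by
  obtain ⟨L, hmem, hlen, hfold⟩ := exists_word n hn (llMul n y (llInv n x))
  obtain ⟨w, hw⟩ := exists_walk_foldr n hn L hmem x
  have hxy : L.foldr (llMul n) x = y := by
    rw [foldr_eq_mul, hfold, llMul_assoc, llInv_mul, llMul_one]
  have hd := SimpleGraph.dist_le w
  rw [hw] at hd
  rw [hxy] at hd
  exact ⟨le_trans hd (by omega), ⟨hxy ▸ w⟩⟩

def llPhi (n : ℕ) [NeZero n] (x : Lamplighter n) : ℕ :=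
  (Finset.univ.filter fun i => x.1 i = 1).card

lemma phi_of_eq_off (n : ℕ) [NeZero n] (x y : Lamplighter n)
    (h : ∀ i : ZMod n, i ≠ 0 → y.1 i = x.1 i) : llPhi n y ≤ llPhi n x + 1 := by
  have hsub : (Finset.univ.filter fun i => y.1 i = 1) ⊆
      insert 0 (Finset.univ.filter fun i => x.1 i = 1) := by
    intro i hi
    simp only [Finset.mem_filter, Finset.mem_univ, true_and] at hi
    by_cases h0 : i = 0
    · subst h0; exact Finset.mem_insert_self _ _
    · refine Finset.mem_insert_of_mem ?_
      simp only [Finset.mem_filter, Finset.mem_univ, true_and]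
      rw [← h i h0]; exact hi
  calc llPhi n y ≤ (insert 0 (Finset.univ.filter fun i => x.1 i = 1)).card :=
        Finset.card_le_card hsub
    _ ≤ llPhi n x + 1 := Finset.card_insert_le _ _

lemma phi_of_shift (n : ℕ) [NeZero n] (x y : Lamplighter n) (c : ZMod n)
    (h : ∀ i : ZMod n, y.1 i = x.1 (i - c)) : llPhi n y = llPhi n x := by
  apply Finset.card_bij (fun i _ => i - c)
  · intro i hi
    simp only [Finset.mem_filter, Finset.mem_univ, true_and] at hi ⊢
    rw [← h i]; exact hi
  · intro a _ b _ hab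
    exact sub_left_injective hab
  · intro j hj
    refine ⟨j + c, ?_, by ring⟩
    simp only [Finset.mem_filter, Finset.mem_univ, true_and] at hj ⊢
    rw [h (j + c), add_sub_cancel_right]
    exact hj

lemma phi_adj (n : ℕ) [NeZero n] (x y : Lamplighter n)
    (h : (llGraph n).Adj x y) : llPhi n y ≤ llPhi n x + 1 := by
  obtain ⟨-, s, hs, hc⟩ := (h : x ≠ y ∧ ∃ s ∈ llGens n, y = llMul n s x ∨ x = llMul n s y)
  fin_cases hs <;> rcases hc with hc | hc
  · -- y = A x
    apply phi_of_eq_off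
    intro i hi
    rw [hc]
    simp [llMul, llGenA, hi]
  · -- x = A y
    apply phi_of_eq_off
    intro i hi
    have := congrFun (congrArg Prod.fst hc) i
    simp [llMul, llGenA, hi] at this
    exact this.symm
  · -- y = B x
    rw [phi_of_shift n x y 1 (fun i => by rw [hc]; simp [llMul, llGenB])]
    omega
  · -- x = B y
    rw [← phi_of_shift n y x 1 (fun i => by rw [hc]; simp [llMul, llGenB])]
    omega
  · -- y = A⁻¹ x
    apply phi_of_eq_off
    intro i hi
    rw [hc]
    simp only [llMul, llInv, llGenA]
    rw [if_neg (by simpa using hi)]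
    simp
  · -- x = A⁻¹ y
    apply phi_of_eq_off
    intro i hi
    have := congrFun (congrArg Prod.fst hc) i
    simp only [llMul, llInv, llGenA] at this
    rw [if_neg (by simpa using hi)] at this
    simpa using this.symm
  · -- y = B⁻¹ x
    rw [phi_of_shift n x y (-1) (fun i => by rw [hc]; simp [llMul, llInv, llGenB, sub_neg_eq_add])]
    omega
  · -- x = B⁻¹ y
    rw [← phi_of_shift n y x (-1) (fun i => by rw [hc]; simp [llMul, llInv, llGenB, sub_neg_eq_add])]
    omega

lemma phi_walk (n : ℕ) [NeZero n] {x y : Lamplighter n} (w : (llGraph n).Walk x y) :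
    llPhi n y ≤ llPhi n x + w.length := by
  induction w with
  | nil => simp
  | cons h p ih =>
    have := phi_adj n _ _ h
    simp only [SimpleGraph.Walk.length_cons]
    omega

lemma diam_bounds (n : ℕ) (hn : 2 ≤ n) : n ≤ llDiam n ∧ llDiam n ≤ 3 * n := by
  haveI : NeZero n := ⟨by omega⟩
  have hub : ∀ d ∈ {d : ℕ | ∃ x y : Lamplighter n, d = (llGraph n).dist x y}, d ≤ 3 * n := by
    rintro d ⟨x, y, rfl⟩
    exact (dist_le_3n n hn x y).1
  have hbdd : BddAbove {d : ℕ | ∃ x y : Lamplighter n, d = (llGraph n).dist x y} :=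
    ⟨3 * n, hub⟩
  constructor
  · set z : Lamplighter n := (fun _ => 1, 0) with hz
    have hreach := (dist_le_3n n hn (llOne n) z).2
    obtain ⟨w, hw⟩ := hreach.exists_walk_length_eq_dist
    have hphi := phi_walk n w
    have h1 : llPhi n (llOne n) = 0 := by
      simp [llPhi, llOne]
    have h2 : llPhi n z = n := by
      have : (Finset.univ.filter fun i : ZMod n => z.1 i = 1) = Finset.univ := by
        apply Finset.filter_true_of_mem
        intro i _
        simp [hz]
      rw [llPhi, this, Finset.card_univ, ZMod.card]
    have hdist : n ≤ (llGraph n).dist (llOne n) z := by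
      rw [h1, h2, hw] at hphi
      omega
    calc n ≤ (llGraph n).dist (llOne n) z := hdist
      _ ≤ llDiam n := le_csSup hbdd ⟨llOne n, z, rfl⟩
  · exact csSup_le ⟨(llGraph n).dist (llOne n) (llOne n), llOne n, llOne n, rfl⟩ hub

theorem statement_9 :
    ∃ c₁ : ℝ, 0 < c₁ ∧ ∃ c₂ : ℝ, 0 < c₂ ∧ ∀ n : ℕ, 2 ≤ n →
      c₁ * (n : ℝ) ≤ (llDiam n : ℝ) ∧ (llDiam n : ℝ) ≤ c₂ * (n : ℝ) := by
  refine ⟨1, one_pos, 3, by norm_num, fun n hn => ?_⟩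
  obtain ⟨h1, h2⟩ := diam_bounds n hn
  constructor
  · rw [one_mul]; exact_mod_cast h1
  · calc (llDiam n : ℝ) ≤ ((3 * n : ℕ) : ℝ) := by exact_mod_cast h2
      _ = 3 * n := by push_cast; ring
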